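/- Assume E_max ≥ 1, Δ_max ≥ 1, 0 < p < 1, 0 < q < 1, 0 < β < 1, and 0 < p_s ≤ 1. Then there exist θ ∈ ℝ and V : 𝔖 → ℝ solving the average-cost Bellman equation θ + V(S) = c(S) + min{(K_0 V)(S), (K_1 V)(S)} for all S ∈ 𝔖, where (K_a V)(S) = ∑_{S'∈𝔖} K_a(S,S') V(S') (existence part of Proposition 2). -/

import Mathlib

open Finset

namespace VIA

/-- The MDP state space: battery level, source state, VIA value. -/
abbrev State (Emax Dmax : ℕ) := Fin (Emax + 1) × Bool × Fin (Dmax + 1)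

/-- Deterministic next state given the action `a`, energy arrival `b`,
source-flip indicator `f`, and channel-success indicator `h`. -/
def nextState (Emax Dmax : ℕ) (s : State Emax Dmax) (a b f h : Bool) :
    State Emax Dmax :=
  let act : Bool := a && decide (0 < s.1.val)
  -- a successful transmission requires transmitting and channel success
  let succ : Bool := act && h
  (⟨min (s.1.val + (if b then 1 else 0) - (if act then 1 else 0)) Emax,
      Nat.lt_succ_of_le (min_le_right _ _)⟩,
   (if f then !s.2.1 else s.2.1),
   ⟨min (if succ then (if f then 1 else 0)
         else (if f then s.2.2.val + 1 else s.2.2.val)) Dmax,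
      Nat.lt_succ_of_le (min_le_right _ _)⟩)

/-- Bernoulli weight: probability `x` for `true`, `1 - x` for `false`. -/
def bern (x : ℝ) : Bool → ℝ := fun b => if b then x else 1 - x

/-- The transition kernel `K_a(s, s')` of the MDP, for action `a`
(`a = true` means transmit).  The source flips with probability `p`
from state `0 = false` and with probability `q` from state `1 = true`;
energy arrives with probability `β`; a transmission succeeds with
probability `ps`. -/
def K (Emax Dmax : ℕ) (p q β ps : ℝ) (a : Bool) (s s' : State Emax Dmax) : ℝ :=
  ∑ b : Bool, ∑ f : Bool, ∑ h : Bool,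
    bern β b * bern (if s.2.1 then q else p) f * bern ps h *
      (if nextState Emax Dmax s a b f h = s' then 1 else 0)

/-- The per-stage cost: the VIA value. -/
def cost (Emax Dmax : ℕ) (s : State Emax Dmax) : ℝ := s.2.2.val

/-- `(K_a V)(s) = ∑_{s'} K_a(s,s') V(s')`. -/
def KV (Emax Dmax : ℕ) (p q β ps : ℝ) (a : Bool) (V : State Emax Dmax → ℝ)
    (s : State Emax Dmax) : ℝ :=
  ∑ s' : State Emax Dmax, K Emax Dmax p q β ps a s s' * V s'

/-- Value iteration: `V_0 ≡ 0`,
`V_{t+1}(s) = c(s) + min{(K_0 V_t)(s), (K_1 V_t)(s)}`. -/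
def Viter (Emax Dmax : ℕ) (p q β ps : ℝ) : ℕ → State Emax Dmax → ℝ
  | 0 => fun _ => 0
  | t + 1 => fun s =>
      cost Emax Dmax s +
        min (KV Emax Dmax p q β ps false (Viter Emax Dmax p q β ps t) s)
            (KV Emax Dmax p q β ps true (Viter Emax Dmax p q β ps t) s)

/-- `ΔV_t(s) = (K_1 V_t)(s) − (K_0 V_t)(s)`. -/
def dV (Emax Dmax : ℕ) (p q β ps : ℝ) (t : ℕ) (s : State Emax Dmax) : ℝ :=
  KV Emax Dmax p q β ps true (Viter Emax Dmax p q β ps t) s -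
    KV Emax Dmax p q β ps false (Viter Emax Dmax p q β ps t) s


section Basic

variable {Emax Dmax : ℕ} {p q β ps : ℝ}

lemma bern_nonneg {x : ℝ} (h0 : 0 ≤ x) (h1 : x ≤ 1) (b : Bool) : 0 ≤ bern x b := by
  cases b <;> simp [bern] <;> linarith

lemma bern_sum (x : ℝ) : (∑ b : Bool, bern x b) = 1 := by
  simp [bern]

/-- probability of the source flipping. -/
def pf (p q : ℝ) (s : State Emax Dmax) : ℝ := if s.2.1 then q else p

lemma K_nonneg (hβ0 : 0 ≤ β) (hβ1 : β ≤ 1) (hp0 : 0 ≤ p) (hp1 : p ≤ 1)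
    (hq0 : 0 ≤ q) (hq1 : q ≤ 1) (hps0 : 0 ≤ ps) (hps1 : ps ≤ 1)
    (a : Bool) (s s' : State Emax Dmax) : 0 ≤ K Emax Dmax p q β ps a s s' := by
  refine Finset.sum_nonneg fun b _ => Finset.sum_nonneg fun f _ => Finset.sum_nonneg fun h _ => ?_
  have h1 : 0 ≤ bern (if s.2.1 then q else p) f := by
    split <;> exact bern_nonneg (by assumption) (by assumption) _
  have := bern_nonneg hβ0 hβ1 b
  have := bern_nonneg hps0 hps1 h
  positivity

lemma K_rowsum (a : Bool) (s : State Emax Dmax) :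
    (∑ s' : State Emax Dmax, K Emax Dmax p q β ps a s s') = 1 := by
  unfold K
  rw [Finset.sum_comm]
  simp_rw [Finset.sum_comm (s := (Finset.univ : Finset (State Emax Dmax)))]
  cases hX : s.2.1 <;> simp [hX, bern, Finset.sum_ite_eq, ← Finset.sum_mul] <;> ring

end Basic

section Basic2

variable {Emax Dmax : ℕ} {p q β ps : ℝ}
variable (hβ0 : 0 ≤ β) (hβ1 : β ≤ 1) (hp0 : 0 ≤ p) (hp1 : p ≤ 1)
    (hq0 : 0 ≤ q) (hq1 : q ≤ 1) (hps0 : 0 ≤ ps) (hps1 : ps ≤ 1)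

include hβ0 hβ1 hp0 hp1 hq0 hq1 hps0 hps1

lemma K_le_one (a : Bool) (s s' : State Emax Dmax) : K Emax Dmax p q β ps a s s' ≤ 1 := by
  have h := K_rowsum (Emax := Emax) (Dmax := Dmax) (p := p) (q := q) (β := β) (ps := ps) a s
  calc K Emax Dmax p q β ps a s s' ≤ ∑ x : State Emax Dmax, K Emax Dmax p q β ps a s x :=
        Finset.single_le_sum (fun x _ => K_nonneg hβ0 hβ1 hp0 hp1 hq0 hq1 hps0 hps1 a s x)
          (Finset.mem_univ s')
    _ = 1 := h

lemma term_le_K (a b f : Bool) (s s' : State Emax Dmax)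
    (hnext : nextState Emax Dmax s a b f true = s') :
    bern β b * bern (if s.2.1 then q else p) f * ps ≤ K Emax Dmax p q β ps a s s' := by
  have hrw : K Emax Dmax p q β ps a s s' = ∑ x : Bool × Bool × Bool,
      bern β x.1 * bern (if s.2.1 then q else p) x.2.1 * bern ps x.2.2 *
        (if nextState Emax Dmax s a x.1 x.2.1 x.2.2 = s' then 1 else 0) := by
    rw [K, Fintype.sum_prod_type]
    refine Finset.sum_congr rfl fun b' _ => ?_
    rw [Fintype.sum_prod_type]
  rw [hrw]
  have hterm : bern β b * bern (if s.2.1 then q else p) f * ps =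
      bern β b * bern (if s.2.1 then q else p) f * bern ps true *
        (if nextState Emax Dmax s a b f true = s' then 1 else 0) := by
    simp [hnext, bern]
  rw [hterm]
  refine Finset.single_le_sum (f := fun x : Bool × Bool × Bool =>
      bern β x.1 * bern (if s.2.1 then q else p) x.2.1 * bern ps x.2.2 *
        (if nextState Emax Dmax s a x.1 x.2.1 x.2.2 = s' then 1 else 0))
    (fun x _ => ?_) (Finset.mem_univ (b, f, true))
  have h1 : 0 ≤ bern (if s.2.1 then q else p) x.2.1 := by
    split <;> exact bern_nonneg (by assumption) (by assumption) _
  have := bern_nonneg hβ0 hβ1 x.1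
  have := bern_nonneg hps0 hps1 x.2.2
  have : (0:ℝ) ≤ (if nextState Emax Dmax s a x.1 x.2.1 x.2.2 = s' then 1 else 0) := by positivity
  positivity

end Basic2

section KVlemmas

variable {Emax Dmax : ℕ} {p q β ps : ℝ}
variable (hβ0 : 0 ≤ β) (hβ1 : β ≤ 1) (hp0 : 0 ≤ p) (hp1 : p ≤ 1)
    (hq0 : 0 ≤ q) (hq1 : q ≤ 1) (hps0 : 0 ≤ ps) (hps1 : ps ≤ 1)

include hβ0 hβ1 hp0 hp1 hq0 hq1 hps0 hps1

lemma KV_nonneg {V : State Emax Dmax → ℝ} (hV : ∀ x, 0 ≤ V x) (a : Bool)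
    (s : State Emax Dmax) : 0 ≤ KV Emax Dmax p q β ps a V s :=
  Finset.sum_nonneg fun x _ =>
    mul_nonneg (K_nonneg hβ0 hβ1 hp0 hp1 hq0 hq1 hps0 hps1 a s x) (hV x)

lemma KV_dist {U V : State Emax Dmax → ℝ} {d : ℝ} (hd : ∀ x, |U x - V x| ≤ d)
    (a : Bool) (s : State Emax Dmax) :
    |KV Emax Dmax p q β ps a U s - KV Emax Dmax p q β ps a V s| ≤ d := by
  have hK0 := fun x => K_nonneg hβ0 hβ1 hp0 hp1 hq0 hq1 hps0 hps1 a s x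
  have : KV Emax Dmax p q β ps a U s - KV Emax Dmax p q β ps a V s
      = ∑ x : State Emax Dmax, K Emax Dmax p q β ps a s x * (U x - V x) := by
    rw [KV, KV, ← Finset.sum_sub_distrib]
    exact Finset.sum_congr rfl fun x _ => by ring
  rw [this]
  calc |∑ x : State Emax Dmax, K Emax Dmax p q β ps a s x * (U x - V x)|
      ≤ ∑ x : State Emax Dmax, |K Emax Dmax p q β ps a s x * (U x - V x)| :=
        Finset.abs_sum_le_sum_abs _ _
    _ ≤ ∑ x : State Emax Dmax, K Emax Dmax p q β ps a s x * d := by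
        refine Finset.sum_le_sum fun x _ => ?_
        rw [abs_mul, abs_of_nonneg (hK0 x)]
        exact mul_le_mul_of_nonneg_left (hd x) (hK0 x)
    _ = d := by rw [← Finset.sum_mul, K_rowsum, one_mul]

omit hβ0 hβ1 hp0 hp1 hq0 hq1 hps0 hps1 in
lemma KV_shift (V : State Emax Dmax → ℝ) (c : ℝ) (a : Bool) (s : State Emax Dmax) :
    KV Emax Dmax p q β ps a (fun x => V x + c) s = KV Emax Dmax p q β ps a V s + c := by
  rw [KV, KV]
  have : ∀ x : State Emax Dmax, K Emax Dmax p q β ps a s x * (V x + c)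
      = K Emax Dmax p q β ps a s x * V x + K Emax Dmax p q β ps a s x * c := fun x => by ring
  rw [Finset.sum_congr rfl fun x _ => this x, Finset.sum_add_distrib, ← Finset.sum_mul,
    K_rowsum, one_mul]

/-- one-step splitting bound. -/
lemma KV_step_bound {V : State Emax Dmax → ℝ} {M v : ℝ} (hV0 : ∀ x, 0 ≤ V x)
    (hVM : ∀ x, V x ≤ M) {a : Bool} {s s₁ : State Emax Dmax}
    (hv : v ≤ K Emax Dmax p q β ps a s s₁) (hv0 : 0 ≤ v) :
    KV Emax Dmax p q β ps a V s ≤ v * V s₁ + (1 - v) * M := by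
  have hK0 := fun x => K_nonneg hβ0 hβ1 hp0 hp1 hq0 hq1 hps0 hps1 a s x
  have hsplit : KV Emax Dmax p q β ps a V s
      = (∑ x : State Emax Dmax,
          (K Emax Dmax p q β ps a s x - (if x = s₁ then v else 0)) * V x) + v * V s₁ := by
    rw [KV]
    rw [Finset.sum_congr rfl (fun x _ => by ring :
      ∀ x ∈ Finset.univ, (K Emax Dmax p q β ps a s x - (if x = s₁ then v else 0)) * V x
        = K Emax Dmax p q β ps a s x * V x - (if x = s₁ then v else 0) * V x)]
    rw [Finset.sum_sub_distrib]
    simp [Finset.sum_ite_eq']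
  rw [hsplit]
  have hM0 : 0 ≤ M := le_trans (hV0 s₁) (hVM s₁)
  have hbound : (∑ x : State Emax Dmax,
      (K Emax Dmax p q β ps a s x - (if x = s₁ then v else 0)) * V x)
      ≤ ∑ x : State Emax Dmax,
        (K Emax Dmax p q β ps a s x - (if x = s₁ then v else 0)) * M := by
    refine Finset.sum_le_sum fun x _ => ?_
    have hnn : 0 ≤ K Emax Dmax p q β ps a s x - (if x = s₁ then v else 0) := by
      split
      · next hxe => subst hxe; linarith
      · simpa using hK0 x
    exact mul_le_mul_of_nonneg_left (hVM x) hnn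
  have hsum : (∑ x : State Emax Dmax,
      (K Emax Dmax p q β ps a s x - (if x = s₁ then v else 0)) * M) = (1 - v) * M := by
    rw [← Finset.sum_mul]
    congr 1
    rw [Finset.sum_sub_distrib, K_rowsum]
    simp [Finset.sum_ite_eq']
  rw [hsum] at hbound
  linarith

end KVlemmas

section ReachSec

variable {Emax Dmax : ℕ} {p q β ps : ℝ}

/-- positive-probability reachability chains through the kernel. -/
inductive Reach (Emax Dmax : ℕ) (p q β ps : ℝ) :
    State Emax Dmax → State Emax Dmax → ℕ → ℝ → Prop
  | refl (s : State Emax Dmax) : Reach Emax Dmax p q β ps s s 0 1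
  | step {s s'' s' : State Emax Dmax} {t : ℕ} {v w : ℝ} (a : Bool)
      (hv : v ≤ K Emax Dmax p q β ps a s s'') (hv0 : 0 < v)
      (h : Reach Emax Dmax p q β ps s'' s' t w) :
      Reach Emax Dmax p q β ps s s' (t + 1) (v * w)

lemma Reach.cast {s s' : State Emax Dmax} {t t' : ℕ} {w w' : ℝ}
    (h : Reach Emax Dmax p q β ps s s' t w) (ht : t = t') (hw : w = w') :
    Reach Emax Dmax p q β ps s s' t' w' := ht ▸ hw ▸ h

lemma Reach.trans {s s'' s' : State Emax Dmax} {t t' : ℕ} {w w' : ℝ}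
    (h1 : Reach Emax Dmax p q β ps s s'' t w)
    (h2 : Reach Emax Dmax p q β ps s'' s' t' w') :
    Reach Emax Dmax p q β ps s s' (t + t') (w * w') := by
  induction h1 with
  | refl s => exact h2.cast (by omega) (by ring)
  | step a hv hv0 h ih => exact ((ih h2).step a hv hv0).cast (by omega) (by ring)

lemma Reach.pos {s s' : State Emax Dmax} {t : ℕ} {w : ℝ}
    (h : Reach Emax Dmax p q β ps s s' t w) : 0 < w := by
  induction h with
  | refl s => norm_num
  | step a hv hv0 h ih => exact mul_pos hv0 ih

lemma Reach.le_one (hβ0 : 0 ≤ β) (hβ1 : β ≤ 1) (hp0 : 0 ≤ p) (hp1 : p ≤ 1)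
    (hq0 : 0 ≤ q) (hq1 : q ≤ 1) (hps0 : 0 ≤ ps) (hps1 : ps ≤ 1)
    {s s' : State Emax Dmax} {t : ℕ} {w : ℝ}
    (h : Reach Emax Dmax p q β ps s s' t w) : w ≤ 1 := by
  induction h with
  | refl s => exact le_refl _
  | step a hv hv0 h ih =>
    rename_i s1 s2 s3 t1 v1 w1
    have hv1 : v1 ≤ 1 := hv.trans (K_le_one hβ0 hβ1 hp0 hp1 hq0 hq1 hps0 hps1 _ _ _)
    have := h.pos
    nlinarith

/-- `ReachP s s'`: `s'` reachable from `s` with positive probability. -/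
def ReachP (Emax Dmax : ℕ) (p q β ps : ℝ) (s s' : State Emax Dmax) : Prop :=
  ∃ t w, Reach Emax Dmax p q β ps s s' t w

lemma ReachP.refl (s : State Emax Dmax) : ReachP Emax Dmax p q β ps s s :=
  ⟨0, 1, Reach.refl s⟩

lemma ReachP.trans {s s'' s' : State Emax Dmax} (h1 : ReachP Emax Dmax p q β ps s s'')
    (h2 : ReachP Emax Dmax p q β ps s'' s') : ReachP Emax Dmax p q β ps s s' := by
  obtain ⟨t, w, h1⟩ := h1; obtain ⟨t', w', h2⟩ := h2
  exact ⟨_, _, h1.trans h2⟩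

end ReachSec

lemma ReachP.cast {Emax Dmax : ℕ} {p q β ps : ℝ} {s s' s₂ s₂' : State Emax Dmax}
    (h : ReachP Emax Dmax p q β ps s s') (hs : s = s₂) (hs' : s' = s₂') :
    ReachP Emax Dmax p q β ps s₂ s₂' := hs ▸ hs' ▸ h

section Steps

variable {Emax Dmax : ℕ} {p q β ps : ℝ}
variable (hβ0 : 0 < β) (hβ1 : β < 1) (hp0 : 0 < p) (hp1 : p < 1)
    (hq0 : 0 < q) (hq1 : q < 1) (hps0 : 0 < ps) (hps1 : ps ≤ 1)

include hβ0 hβ1 hp0 hp1 hq0 hq1 hps0 hps1 in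
lemma ReachP.single {s s' : State Emax Dmax} (a b f : Bool)
    (hnext : nextState Emax Dmax s a b f true = s') : ReachP Emax Dmax p q β ps s s' := by
  refine ⟨1, _, Reach.step a (term_le_K hβ0.le hβ1.le hp0.le hp1.le hq0.le hq1.le hps0.le hps1
      a b f s s' hnext) ?_ (Reach.refl s') |>.cast rfl (mul_one _)⟩
  have h1 : 0 < bern (if s.2.1 then q else p) f := by
    cases f <;> split <;> simp [bern] <;> linarith
  have h2 : 0 < bern β b := by cases b <;> simp [bern] <;> linarith
  positivity

-- state-building helper
def mkS (Emax Dmax : ℕ) (e : ℕ) (he : e ≤ Emax) (X : Bool) (d : ℕ) (hd : d ≤ Dmax) :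
    State Emax Dmax := (⟨e, by omega⟩, X, ⟨d, by omega⟩)

lemma next_charge {e d : ℕ} (he : e < Emax) (hd : d ≤ Dmax) (X : Bool) :
    nextState Emax Dmax (mkS Emax Dmax e (by omega) X d hd) false true false true
      = mkS Emax Dmax (e+1) (by omega) X d hd := by
  simp only [nextState, mkS]
  refine Prod.ext ?_ (Prod.ext ?_ ?_) <;> simp <;> omega

lemma next_flip {e d : ℕ} (he : e ≤ Emax) (hd : d ≤ Dmax) (X : Bool) :
    nextState Emax Dmax (mkS Emax Dmax e he X d hd) false false true true
      = mkS Emax Dmax e he (!X) (min (d+1) Dmax) (by omega) := by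
  simp only [nextState, mkS]
  refine Prod.ext ?_ (Prod.ext ?_ ?_) <;> simp <;> omega

lemma next_succ {e d : ℕ} (he : e ≤ Emax) (hd : d ≤ Dmax) (he0 : 0 < e) (X : Bool) :
    nextState Emax Dmax (mkS Emax Dmax e he X d hd) true false false true
      = mkS Emax Dmax (e-1) (by omega) X 0 (by omega) := by
  simp only [nextState, mkS]
  refine Prod.ext ?_ (Prod.ext ?_ ?_) <;> simp [he0] <;> omega

lemma next_succflip {e d : ℕ} (he : e ≤ Emax) (hd : d ≤ Dmax) (he0 : 0 < e)
    (hD : 1 ≤ Dmax) (X : Bool) :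
    nextState Emax Dmax (mkS Emax Dmax e he X d hd) true false true true
      = mkS Emax Dmax (e-1) (by omega) (!X) 1 (by omega) := by
  simp only [nextState, mkS]
  refine Prod.ext ?_ (Prod.ext ?_ ?_) <;> simp [he0] <;> omega

end Steps

section Constructions

variable {Emax Dmax : ℕ} {p q β ps : ℝ}
variable (hE : 1 ≤ Emax) (hD : 1 ≤ Dmax)
variable (hβ0 : 0 < β) (hβ1 : β < 1) (hp0 : 0 < p) (hp1 : p < 1)
    (hq0 : 0 < q) (hq1 : q < 1) (hps0 : 0 < ps) (hps1 : ps ≤ 1)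

lemma mkS_congr {e e' d d' : ℕ} {he : e ≤ Emax} {he' : e' ≤ Emax} {hd : d ≤ Dmax}
    {hd' : d' ≤ Dmax} (hee : e = e') (hdd : d = d') (X : Bool) :
    mkS Emax Dmax e he X d hd = mkS Emax Dmax e' he' X d' hd' := by
  subst hee; subst hdd; rfl

include hβ0 hβ1 hp0 hp1 hq0 hq1 hps0 hps1

/-- drain the battery, keeping `Δ = 0`. -/
lemma reach_drain : ∀ e (he : e ≤ Emax) (X : Bool),
    ReachP Emax Dmax p q β ps (mkS Emax Dmax e he X 0 (Nat.zero_le _))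
      (mkS Emax Dmax 0 (Nat.zero_le _) X 0 (Nat.zero_le _)) := by
  intro e
  induction e with
  | zero => exact fun he X => ReachP.refl _
  | succ e ih =>
    intro he X
    refine (ReachP.single hβ0 hβ1 hp0 hp1 hq0 hq1 hps0 hps1 true false false
      (next_succ he (Nat.zero_le _) (Nat.succ_pos _) X)).trans ?_
    exact ih (by omega) X

/-- charge the battery by `k`, fixing everything else. -/
lemma reach_charge : ∀ k e (h : e + k ≤ Emax) (X : Bool) d (hd : d ≤ Dmax),
    ReachP Emax Dmax p q β ps (mkS Emax Dmax e (by omega) X d hd)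
      (mkS Emax Dmax (e + k) (by omega) X d hd) := by
  intro k
  induction k with
  | zero => exact fun e h X d hd => (ReachP.refl _).cast rfl (mkS_congr (by omega) rfl X)
  | succ k ih =>
    intro e h X d hd
    refine (ReachP.single hβ0 hβ1 hp0 hp1 hq0 hq1 hps0 hps1 false true false
      (next_charge (by omega) hd X)).trans ?_
    exact (ih (e+1) (by omega) X d hd).cast rfl (mkS_congr (by omega) rfl X)

/-- build up `Δ` by `j` flips (no transmission). -/
lemma reach_flips : ∀ j (X : Bool) e (he : e ≤ Emax) d (hd : d + j ≤ Dmax),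
    ReachP Emax Dmax p q β ps (mkS Emax Dmax e he X d (by omega))
      (mkS Emax Dmax e he (if Even j then X else !X) (d + j) (by omega)) := by
  intro j
  induction j with
  | zero => exact fun X e he d hd => (ReachP.refl _).cast rfl (by simp [mkS_congr])
  | succ j ih =>
    intro X e he d hd
    have hstep : ReachP Emax Dmax p q β ps (mkS Emax Dmax e he X d (by omega))
        (mkS Emax Dmax e he (!X) (d+1) (by omega)) :=
      (ReachP.single hβ0 hβ1 hp0 hp1 hq0 hq1 hps0 hps1 false false true
        (next_flip he (by omega) X)).cast rfl (mkS_congr rfl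
          (show min (d+1) Dmax = d + 1 by omega) _)
    refine hstep.trans ?_
    have hb : (if Even j then !X else !(!X)) = (if Even (j+1) then X else !X) := by
      rcases Nat.even_or_odd j with hj | hj
      · have : ¬ Even (j+1) := by simp [Nat.even_add_one]; exact hj
        simp [hj, this]
      · have h1 : ¬ Even j := Nat.not_even_iff_odd.2 hj
        have h2 : Even (j+1) := by simpa [Nat.even_add_one] using h1
        simp [h1, h2]
    refine (ih (!X) e he (d+1) (by omega)).cast rfl ?_
    rw [hb]
    exact mkS_congr rfl (by omega) _
  
end Constructions

section Connect

variable {Emax Dmax : ℕ} {p q β ps : ℝ}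
variable (hE : 1 ≤ Emax) (hD : 1 ≤ Dmax)
variable (hβ0 : 0 < β) (hβ1 : β < 1) (hp0 : 0 < p) (hp1 : p < 1)
    (hq0 : 0 < q) (hq1 : q < 1) (hps0 : 0 < ps) (hps1 : ps ≤ 1)

/-- the anchor state `(0, false, 0)`. -/
def anchor (Emax Dmax : ℕ) : State Emax Dmax :=
  mkS Emax Dmax 0 (Nat.zero_le _) false 0 (Nat.zero_le _)

include hβ0 hβ1 hp0 hp1 hq0 hq1 hps0 hps1

include hE in
lemma reach_to_anchor (s : State Emax Dmax) :
    ReachP Emax Dmax p q β ps s (anchor Emax Dmax) := by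
  obtain ⟨⟨e, he⟩, X, ⟨d, hd⟩⟩ := s
  have he' : e ≤ Emax := by omega
  have hd' : d ≤ Dmax := by omega
  have key : ∀ e₁ (he₁ : e₁ ≤ Emax), 1 ≤ e₁ → ∀ (X₁ : Bool) d₁ (hd₁ : d₁ ≤ Dmax),
      ReachP Emax Dmax p q β ps (mkS Emax Dmax e₁ he₁ X₁ d₁ hd₁) (anchor Emax Dmax) := by
    have keyF : ∀ e₁ (he₁ : e₁ ≤ Emax), 1 ≤ e₁ → ∀ d₁ (hd₁ : d₁ ≤ Dmax),
        ReachP Emax Dmax p q β ps (mkS Emax Dmax e₁ he₁ false d₁ hd₁)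
          (anchor Emax Dmax) := by
      intro e₁ he₁ he₀ d₁ hd₁
      refine (ReachP.single hβ0 hβ1 hp0 hp1 hq0 hq1 hps0 hps1 true false false
        (next_succ he₁ hd₁ (by omega) false)).trans ?_
      exact reach_drain hβ0 hβ1 hp0 hp1 hq0 hq1 hps0 hps1 (e₁ - 1) (by omega) false
    intro e₁ he₁ he₀ X₁ d₁ hd₁
    cases X₁ with
    | false => exact keyF e₁ he₁ he₀ d₁ hd₁
    | true =>
      refine (ReachP.single hβ0 hβ1 hp0 hp1 hq0 hq1 hps0 hps1 false false true
        (next_flip he₁ hd₁ true)).trans ?_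
      exact keyF e₁ he₁ he₀ _ (by omega)
  by_cases he0 : 1 ≤ e
  · exact key e he' he0 X d hd'
  · have he1 : e = 0 := by omega
    subst he1
    refine (ReachP.single hβ0 hβ1 hp0 hp1 hq0 hq1 hps0 hps1 false true false
      (next_charge (by omega) hd' X)).trans ?_
    exact key 1 (by omega) le_rfl X d hd'

include hE hD in
lemma reach_from_anchor (s : State Emax Dmax) :
    ReachP Emax Dmax p q β ps (anchor Emax Dmax) s := by
  obtain ⟨⟨e, he⟩, X, ⟨d, hd⟩⟩ := s
  have he' : e ≤ Emax := by omega
  have hd' : d ≤ Dmax := by omega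
  -- we can reach `(1, Y, 0)` for either Bool `Y`
  have aux : ∀ Y : Bool, ReachP Emax Dmax p q β ps (anchor Emax Dmax)
      (mkS Emax Dmax 1 hE Y 0 (Nat.zero_le _)) := by
    intro Y
    cases Y with
    | false =>
      exact (reach_charge hβ0 hβ1 hp0 hp1 hq0 hq1 hps0 hps1 1 0 (by omega) false 0
        (Nat.zero_le _)).cast rfl (mkS_congr (by omega) rfl _)
    | true =>
      have h1 : ReachP Emax Dmax p q β ps (anchor Emax Dmax)
          (mkS Emax Dmax 0 (Nat.zero_le _) true (min (0+1) Dmax) (min_le_right _ _)) :=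
        ReachP.single hβ0 hβ1 hp0 hp1 hq0 hq1 hps0 hps1 false false true
          (next_flip (Nat.zero_le _) (Nat.zero_le _) false)
      have h2 : ReachP Emax Dmax p q β ps
          (mkS Emax Dmax 0 (Nat.zero_le _) true (min (0+1) Dmax) (min_le_right _ _))
          (mkS Emax Dmax 1 hE true (min (0+1) Dmax) (min_le_right _ _)) :=
        (reach_charge hβ0 hβ1 hp0 hp1 hq0 hq1 hps0 hps1 1 0 (by omega)
          true (min (0+1) Dmax) (min_le_right _ _)).cast rfl
            (mkS_congr (show (0:ℕ) + 1 = 1 by omega) rfl _)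
      have h3 : ReachP Emax Dmax p q β ps
          (mkS Emax Dmax 1 hE true (min (0+1) Dmax) (min_le_right _ _))
          (mkS Emax Dmax 1 hE true 0 (Nat.zero_le _)) := by
        refine (ReachP.single hβ0 hβ1 hp0 hp1 hq0 hq1 hps0 hps1 true false false
          (next_succ hE (min_le_right _ _) (by omega) true)).trans ?_
        exact (reach_charge hβ0 hβ1 hp0 hp1 hq0 hq1 hps0 hps1 1 0 (by omega) true 0
          (Nat.zero_le _)).cast (mkS_congr (show (0:ℕ) = 1 - 1 by omega) rfl _)
            (mkS_congr (show (0:ℕ) + 1 = 1 by omega) rfl _)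
      exact (h1.trans h2).trans h3
  show ReachP Emax Dmax p q β ps (anchor Emax Dmax) (mkS Emax Dmax e he' X d hd')
  by_cases hd0 : d = 0
  · subst hd0
    refine (aux X).trans ?_
    by_cases he0 : e = 0
    · subst he0
      exact (ReachP.single hβ0 hβ1 hp0 hp1 hq0 hq1 hps0 hps1 true false false
        (next_succ hE (Nat.zero_le _) (by omega) X)).cast rfl (mkS_congr (by omega) rfl _)
    · exact (reach_charge hβ0 hβ1 hp0 hp1 hq0 hq1 hps0 hps1 (e - 1) 1 (by omega) X 0
        (Nat.zero_le _)).cast rfl (mkS_congr (by omega) rfl _)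
  · -- d ≥ 1
    set j := d - 1 with hj
    set Y : Bool := if Even j then !X else X with hY
    refine (aux Y).trans ?_
    refine (ReachP.single hβ0 hβ1 hp0 hp1 hq0 hq1 hps0 hps1 true false true
      (next_succflip hE (Nat.zero_le _) (by omega) hD Y)).trans ?_
    have hflips : ReachP Emax Dmax p q β ps
        (mkS Emax Dmax (1 - 1) (by omega) (!Y) 1 hD)
        (mkS Emax Dmax 0 (Nat.zero_le _) X d hd') := by
      have h0 := reach_flips (Emax := Emax) hβ0 hβ1 hp0 hp1 hq0 hq1 hps0 hps1 j (!Y) 0 (Nat.zero_le _) 1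
        (show 1 + j ≤ Dmax by omega)
      refine h0.cast (mkS_congr rfl rfl _) ?_
      have hX : (if Even j then !Y else !(!Y)) = X := by
        rcases Nat.even_or_odd j with hjE | hjE
        · simp [hY, hjE]
        · simp [hY, Nat.not_even_iff_odd.2 hjE]
      rw [hX]
      exact mkS_congr rfl (by omega) _
    refine hflips.trans ?_
    exact (reach_charge hβ0 hβ1 hp0 hp1 hq0 hq1 hps0 hps1 e 0 (by omega) X d
      hd').cast rfl (mkS_congr (by omega) rfl _)

end Connect

section Discounted

variable {Emax Dmax : ℕ} {p q β ps : ℝ}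
variable (hβ0 : 0 ≤ β) (hβ1 : β ≤ 1) (hp0 : 0 ≤ p) (hp1 : p ≤ 1)
    (hq0 : 0 ≤ q) (hq1 : q ≤ 1) (hps0 : 0 ≤ ps) (hps1 : ps ≤ 1)

lemma cost_nonneg (s : State Emax Dmax) : 0 ≤ cost Emax Dmax s := by
  simp [cost]

lemma cost_le (s : State Emax Dmax) : cost Emax Dmax s ≤ (Dmax : ℝ) := by
  have := s.2.2.isLt
  simp only [cost]
  exact_mod_cast Nat.lt_succ_iff.mp this

include hβ0 hβ1 hp0 hp1 hq0 hq1 hps0 hps1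

lemma KV_le_const {V : State Emax Dmax → ℝ} {M : ℝ} (hV : ∀ x, V x ≤ M) (a : Bool)
    (s : State Emax Dmax) : KV Emax Dmax p q β ps a V s ≤ M := by
  have : KV Emax Dmax p q β ps a V s ≤ ∑ x : State Emax Dmax, K Emax Dmax p q β ps a s x * M :=
    Finset.sum_le_sum fun x _ => mul_le_mul_of_nonneg_left (hV x)
      (K_nonneg hβ0 hβ1 hp0 hp1 hq0 hq1 hps0 hps1 a s x)
  rwa [← Finset.sum_mul, K_rowsum, one_mul] at this

lemma const_le_KV {V : State Emax Dmax → ℝ} {m : ℝ} (hV : ∀ x, m ≤ V x) (a : Bool)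
    (s : State Emax Dmax) : m ≤ KV Emax Dmax p q β ps a V s := by
  have : (∑ x : State Emax Dmax, K Emax Dmax p q β ps a s x * m) ≤ KV Emax Dmax p q β ps a V s :=
    Finset.sum_le_sum fun x _ => mul_le_mul_of_nonneg_left (hV x)
      (K_nonneg hβ0 hβ1 hp0 hp1 hq0 hq1 hps0 hps1 a s x)
  rwa [← Finset.sum_mul, K_rowsum, one_mul] at this

/-- Existence of the discounted value function. -/
lemma exists_discounted {α : ℝ} (hα0 : 0 ≤ α) (hα1 : α < 1) :
    ∃ V : State Emax Dmax → ℝ, ∀ s, V s = cost Emax Dmax s +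
      α * min (KV Emax Dmax p q β ps false V s) (KV Emax Dmax p q β ps true V s) := by
  set T : (State Emax Dmax → ℝ) → (State Emax Dmax → ℝ) := fun V s =>
    cost Emax Dmax s +
      α * min (KV Emax Dmax p q β ps false V s) (KV Emax Dmax p q β ps true V s) with hT
  have hlip : LipschitzWith (Real.toNNReal α) T := by
    refine LipschitzWith.of_dist_le_mul fun U V => ?_
    rw [Real.coe_toNNReal α hα0]
    refine (dist_pi_le_iff (by positivity)).2 fun s => ?_
    have hd : ∀ x, |U x - V x| ≤ dist U V := fun x => by
      rw [← Real.dist_eq]; exact dist_le_pi_dist U V x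
    have h0 := KV_dist hβ0 hβ1 hp0 hp1 hq0 hq1 hps0 hps1 hd false s
    have h1 := KV_dist hβ0 hβ1 hp0 hp1 hq0 hq1 hps0 hps1 hd true s
    rw [Real.dist_eq]
    have : T U s - T V s = α *
        (min (KV Emax Dmax p q β ps false U s) (KV Emax Dmax p q β ps true U s) -
         min (KV Emax Dmax p q β ps false V s) (KV Emax Dmax p q β ps true V s)) := by
      simp only [hT]; ring
    rw [this, abs_mul, abs_of_nonneg hα0]
    refine mul_le_mul_of_nonneg_left ?_ hα0
    exact (abs_min_sub_min_le_max _ _ _ _).trans (max_le h0 h1)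
  have hcontr : ContractingWith (Real.toNNReal α) T :=
    ⟨by simpa [Real.toNNReal_lt_one] using hα1, hlip⟩
  refine ⟨hcontr.fixedPoint T, fun s => ?_⟩
  conv_lhs => rw [← hcontr.fixedPoint_isFixedPt]

/-- nonnegativity of the discounted value function. -/
lemma discounted_nonneg {α : ℝ} (hα0 : 0 ≤ α) (hα1 : α < 1) {V : State Emax Dmax → ℝ}
    (hfix : ∀ s, V s = cost Emax Dmax s +
      α * min (KV Emax Dmax p q β ps false V s) (KV Emax Dmax p q β ps true V s)) :
    ∀ s, 0 ≤ V s := by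
  obtain ⟨s₀, -, hs₀⟩ := Finset.exists_min_image Finset.univ V ⟨anchor Emax Dmax,
    Finset.mem_univ _⟩
  have hmin : ∀ x, V s₀ ≤ V x := fun x => hs₀ x (Finset.mem_univ x)
  have h0 := const_le_KV hβ0 hβ1 hp0 hp1 hq0 hq1 hps0 hps1 hmin false s₀
  have h1 := const_le_KV hβ0 hβ1 hp0 hp1 hq0 hq1 hps0 hps1 hmin true s₀
  have heq := hfix s₀
  have hc := cost_nonneg (Emax := Emax) (Dmax := Dmax) s₀
  have hVs₀ : 0 ≤ V s₀ := by
    have : V s₀ ≥ α * V s₀ := by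
      rw [heq]
      have : V s₀ ≤ min (KV Emax Dmax p q β ps false V s₀) (KV Emax Dmax p q β ps true V s₀) :=
        le_min h0 h1
      nlinarith
    nlinarith
  exact fun s => le_trans hVs₀ (hmin s)

/-- the discounted value is at most `Dmax / (1 - α)`. -/
lemma discounted_le {α : ℝ} (hα0 : 0 ≤ α) (hα1 : α < 1) {V : State Emax Dmax → ℝ}
    (hfix : ∀ s, V s = cost Emax Dmax s +
      α * min (KV Emax Dmax p q β ps false V s) (KV Emax Dmax p q β ps true V s)) :
    ∀ s, (1 - α) * V s ≤ (Dmax : ℝ) := by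
  obtain ⟨s₁, -, hs₁⟩ := Finset.exists_max_image Finset.univ V ⟨anchor Emax Dmax,
    Finset.mem_univ _⟩
  have hmax : ∀ x, V x ≤ V s₁ := fun x => hs₁ x (Finset.mem_univ x)
  have h0 := KV_le_const hβ0 hβ1 hp0 hp1 hq0 hq1 hps0 hps1 hmax false s₁
  have heq := hfix s₁
  have hc := cost_le (Emax := Emax) (Dmax := Dmax) s₁
  have hkey : (1 - α) * V s₁ ≤ (Dmax : ℝ) := by
    have hm : min (KV Emax Dmax p q β ps false V s₁) (KV Emax Dmax p q β ps true V s₁)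
        ≤ V s₁ := (min_le_left _ _).trans h0
    nlinarith
  intro s
  have h2 := hmax s
  nlinarith

end Discounted

section SpanBound

variable {Emax Dmax : ℕ} {p q β ps : ℝ}
variable (hβ0 : 0 ≤ β) (hβ1 : β ≤ 1) (hp0 : 0 ≤ p) (hp1 : p ≤ 1)
    (hq0 : 0 ≤ q) (hq1 : q ≤ 1) (hps0 : 0 ≤ ps) (hps1 : ps ≤ 1)

include hβ0 hβ1 hp0 hp1 hq0 hq1 hps0 hps1

lemma reach_bound {α : ℝ} (hα0 : 0 ≤ α) (hα1 : α ≤ 1) {V : State Emax Dmax → ℝ} {M : ℝ}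
    (hfix : ∀ s, V s = cost Emax Dmax s +
      α * min (KV Emax Dmax p q β ps false V s) (KV Emax Dmax p q β ps true V s))
    (hV0 : ∀ x, 0 ≤ V x) (hVM : ∀ x, V x ≤ M)
    {s s' : State Emax Dmax} {t : ℕ} {w : ℝ}
    (hr : Reach Emax Dmax p q β ps s s' t w) :
    V s ≤ t * (Dmax : ℝ) + w * V s' + (1 - w) * M := by
  induction hr with
  | refl s => simp
  | step a hv hv0 hr ih =>
    rename_i s₁ s₂ s₃ t₁ v₁ w₁
    have hKV0 : 0 ≤ KV Emax Dmax p q β ps a V s₁ :=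
      KV_nonneg hβ0 hβ1 hp0 hp1 hq0 hq1 hps0 hps1 hV0 a s₁
    have h1 : V s₁ ≤ (Dmax : ℝ) + KV Emax Dmax p q β ps a V s₁ := by
      have hmin : min (KV Emax Dmax p q β ps false V s₁) (KV Emax Dmax p q β ps true V s₁)
          ≤ KV Emax Dmax p q β ps a V s₁ := by
        cases a
        · exact min_le_left _ _
        · exact min_le_right _ _
      have heq := hfix s₁
      have hc := cost_le (Emax := Emax) (Dmax := Dmax) s₁
      nlinarith
    have h2 : KV Emax Dmax p q β ps a V s₁ ≤ v₁ * V s₂ + (1 - v₁) * M :=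
      KV_step_bound hβ0 hβ1 hp0 hp1 hq0 hq1 hps0 hps1 hV0 hVM hv hv0.le
    have hv1 : v₁ ≤ 1 := hv.trans (K_le_one hβ0 hβ1 hp0 hp1 hq0 hq1 hps0 hps1 a s₁ s₂)
    have h3 : v₁ * V s₂ ≤ v₁ * (t₁ * (Dmax : ℝ) + w₁ * V s₃ + (1 - w₁) * M) :=
      mul_le_mul_of_nonneg_left ih hv0.le
    have hDm : (0:ℝ) ≤ (Dmax : ℝ) := Nat.cast_nonneg _
    have ht : (0:ℝ) ≤ (t₁ : ℝ) := Nat.cast_nonneg _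
    push_cast
    nlinarith [mul_nonneg (mul_nonneg (sub_nonneg.2 hv1) ht) hDm]

end SpanBound

section Uniform

variable {Emax Dmax : ℕ} {p q β ps : ℝ}
variable (hE : 1 ≤ Emax) (hD : 1 ≤ Dmax)
variable (hβ0 : 0 < β) (hβ1 : β < 1) (hp0 : 0 < p) (hp1 : p < 1)
    (hq0 : 0 < q) (hq1 : q < 1) (hps0 : 0 < ps) (hps1 : ps ≤ 1)

include hE hD hβ0 hβ1 hp0 hp1 hq0 hq1 hps0 hps1 in
set_option maxHeartbeats 1600000 in
/-- Uniform bound on the span of the discounted value functions. -/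
lemma span_bound : ∃ B : ℝ, 0 ≤ B ∧ ∀ α : ℝ, 0 ≤ α → α < 1 →
    ∀ V : State Emax Dmax → ℝ,
    (∀ s, V s = cost Emax Dmax s +
      α * min (KV Emax Dmax p q β ps false V s) (KV Emax Dmax p q β ps true V s)) →
    ∀ s, |V s - V (anchor Emax Dmax)| ≤ B := by
  have h1 : ∀ s : State Emax Dmax, ∃ t w,
      Reach Emax Dmax p q β ps s (anchor Emax Dmax) t w := fun s =>
    reach_to_anchor hE hβ0 hβ1 hp0 hp1 hq0 hq1 hps0 hps1 s
  have h2 : ∀ s : State Emax Dmax, ∃ t w,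
      Reach Emax Dmax p q β ps (anchor Emax Dmax) s t w := fun s =>
    reach_from_anchor hE hD hβ0 hβ1 hp0 hp1 hq0 hq1 hps0 hps1 s
  choose t1 w1 hw1 using h1
  choose t2 w2 hw2 using h2
  set N : ℕ := Finset.univ.sup (fun s : State Emax Dmax => max (t1 s) (t2 s)) with hN
  set ε : ℝ := Finset.univ.inf' Finset.univ_nonempty
    (fun s : State Emax Dmax => min (w1 s) (w2 s)) with hε
  have hεpos : 0 < ε := by
    rw [hε, Finset.lt_inf'_iff]
    exact fun s _ => lt_min (hw1 s).pos (hw2 s).pos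
  have hεw1 : ∀ s, ε ≤ w1 s := fun s =>
    (Finset.inf'_le _ (Finset.mem_univ s)).trans (min_le_left _ _)
  have hεw2 : ∀ s, ε ≤ w2 s := fun s =>
    (Finset.inf'_le _ (Finset.mem_univ s)).trans (min_le_right _ _)
  have hwle1 : ∀ s, w1 s ≤ 1 := fun s =>
    (hw1 s).le_one hβ0.le hβ1.le hp0.le hp1.le hq0.le hq1.le hps0.le hps1
  have hwle2 : ∀ s, w2 s ≤ 1 := fun s =>
    (hw2 s).le_one hβ0.le hβ1.le hp0.le hp1.le hq0.le hq1.le hps0.le hps1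
  have ht1n : ∀ s, t1 s ≤ N := fun s => (le_max_left _ _).trans
    (Finset.le_sup (f := fun s : State Emax Dmax => max (t1 s) (t2 s)) (Finset.mem_univ s))
  have ht2n : ∀ s, t2 s ≤ N := fun s => (le_max_right _ _).trans
    (Finset.le_sup (f := fun s : State Emax Dmax => max (t1 s) (t2 s)) (Finset.mem_univ s))
  have ht1 : ∀ s, (t1 s : ℝ) ≤ (N : ℝ) := fun s => Nat.cast_le.2 (ht1n s)
  have ht2 : ∀ s, (t2 s : ℝ) ≤ (N : ℝ) := fun s => Nat.cast_le.2 (ht2n s)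
  set C1 : ℝ := (N : ℝ) * (Dmax : ℝ) with hC1
  have hC1nn : 0 ≤ C1 := by positivity
  set B1 : ℝ := C1 / ε with hB1def
  set B2 : ℝ := (C1 + B1) / ε with hB2def
  have hB1 : B1 * ε = C1 := div_mul_cancel₀ _ hεpos.ne'
  have hB1nn : 0 ≤ B1 := by positivity
  have hB2 : B2 * ε = C1 + B1 := div_mul_cancel₀ _ hεpos.ne'
  have hB2nn : 0 ≤ B2 := by positivity
  have hε1 : ε ≤ 1 := (hεw1 (anchor Emax Dmax)).trans (hwle1 _)
  refine ⟨B1 + B2, by positivity, ?_⟩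
  intro α hα0 hα1 V hfix
  have hV0 : ∀ x, 0 ≤ V x :=
    discounted_nonneg hβ0.le hβ1.le hp0.le hp1.le hq0.le hq1.le hps0.le hps1 hα0 hα1 hfix
  obtain ⟨s₁, -, hs₁⟩ := Finset.exists_max_image Finset.univ V ⟨anchor Emax Dmax,
    Finset.mem_univ _⟩
  have hVM : ∀ x, V x ≤ V s₁ := fun x => hs₁ x (Finset.mem_univ x)
  set M : ℝ := V s₁ with hM
  have hd : (0:ℝ) ≤ (Dmax : ℝ) := Nat.cast_nonneg _
  have hub : ∀ s, V s ≤ C1 + ε * V (anchor Emax Dmax) + (1 - ε) * M := by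
    intro s
    have h := reach_bound hβ0.le hβ1.le hp0.le hp1.le hq0.le hq1.le hps0.le hps1 hα0 hα1.le
      hfix hV0 hVM (hw1 s)
    have hVa : V (anchor Emax Dmax) ≤ M := hVM _
    have hint1 : (t1 s : ℝ) * (Dmax : ℝ) ≤ (N : ℝ) * (Dmax : ℝ) :=
      mul_le_mul_of_nonneg_right (ht1 s) hd
    have hint2 : 0 ≤ (w1 s - ε) * (M - V (anchor Emax Dmax)) :=
      mul_nonneg (sub_nonneg.2 (hεw1 s)) (sub_nonneg.2 hVa)
    nlinarith [h, hint1, hint2, hC1]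
  have hD1 : M - V (anchor Emax Dmax) ≤ B1 := by
    rw [hB1def, le_div_iff₀ hεpos]
    nlinarith [hub s₁]
  intro s
  have hub2 : V (anchor Emax Dmax) ≤ C1 + ε * V s + (1 - ε) * M := by
    have h := reach_bound hβ0.le hβ1.le hp0.le hp1.le hq0.le hq1.le hps0.le hps1 hα0 hα1.le
      hfix hV0 hVM (hw2 s)
    have hVs : V s ≤ M := hVM _
    have hint1 : (t2 s : ℝ) * (Dmax : ℝ) ≤ (N : ℝ) * (Dmax : ℝ) :=
      mul_le_mul_of_nonneg_right (ht2 s) hd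
    have hint2 : 0 ≤ (w2 s - ε) * (M - V s) :=
      mul_nonneg (sub_nonneg.2 (hεw2 s)) (sub_nonneg.2 hVs)
    nlinarith [h, hint1, hint2, hC1]
  have hx : V (anchor Emax Dmax) - V s ≤ B2 := by
    rw [hB2def, le_div_iff₀ hεpos]
    have hint1 : (1 - ε) * (M - V (anchor Emax Dmax)) ≤ (1 - ε) * B1 :=
      mul_le_mul_of_nonneg_left hD1 (sub_nonneg.2 hε1)
    have hint2 : 0 ≤ ε * B1 := mul_nonneg hεpos.le hB1nn
    nlinarith [hub2, hint1, hint2]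
  rw [abs_le]
  constructor
  · linarith [hx, hB1nn]
  · linarith [hD1, hVM s, hB2nn]

end Uniform

section Final

variable {Emax Dmax : ℕ} {p q β ps : ℝ}

set_option maxHeartbeats 800000 in
theorem bellman_solution_exists' (hE : 1 ≤ Emax) (hD : 1 ≤ Dmax)
    (hp0 : 0 < p) (hp1 : p < 1) (hq0 : 0 < q) (hq1 : q < 1)
    (hβ0 : 0 < β) (hβ1 : β < 1) (hps0 : 0 < ps) (hps1 : ps ≤ 1) :
    ∃ (θ : ℝ) (V : State Emax Dmax → ℝ), ∀ s : State Emax Dmax,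
      θ + V s = cost Emax Dmax s +
        min (KV Emax Dmax p q β ps false V s) (KV Emax Dmax p q β ps true V s) := by
  obtain ⟨B, hB0, hB⟩ := span_bound hE hD hβ0 hβ1 hp0 hp1 hq0 hq1 hps0 hps1
  set α : ℕ → ℝ := fun n => 1 - 1 / (n + 2) with hαdef
  have hinv : ∀ n : ℕ, 0 < 1 / ((n : ℝ) + 2) := fun n => by positivity
  have hinvle : ∀ n : ℕ, 1 / ((n : ℝ) + 2) ≤ 1 := fun n => by
    rw [div_le_one (by positivity)]
    have : (0:ℝ) ≤ (n : ℝ) := Nat.cast_nonneg n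
    linarith
  have hα0 : ∀ n, 0 ≤ α n := fun n => by
    simp only [hαdef]; linarith [hinvle n]
  have hα1 : ∀ n, α n < 1 := fun n => by
    simp only [hαdef]; linarith [hinv n]
  have hαlim : Filter.Tendsto α Filter.atTop (nhds 1) := by
    have h0 : Filter.Tendsto (fun n : ℕ => 1 / ((n : ℝ) + 2)) Filter.atTop (nhds 0) := by
      have := (tendsto_one_div_add_atTop_nhds_zero_nat (𝕜 := ℝ)).comp
        (Filter.tendsto_add_atTop_nat 1)
      convert this using 2 with n
      simp only [Function.comp_apply]
      push_cast
      ring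
    have := (tendsto_const_nhds (x := (1:ℝ)) (f := Filter.atTop (α := ℕ))).sub h0
    simpa [hαdef, one_div] using this
  have hVex : ∀ n : ℕ, ∃ V : State Emax Dmax → ℝ, ∀ s, V s = cost Emax Dmax s +
      α n * min (KV Emax Dmax p q β ps false V s) (KV Emax Dmax p q β ps true V s) :=
    fun n => exists_discounted hβ0.le hβ1.le hp0.le hp1.le hq0.le hq1.le hps0.le hps1
      (hα0 n) (hα1 n)
  choose W hW using hVex
  -- the normalized pair (θ_n, h_n)
  set g : ℕ → ℝ × (State Emax Dmax → ℝ) := fun n =>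
    ((1 - α n) * W n (anchor Emax Dmax), fun s => W n s - W n (anchor Emax Dmax)) with hg
  have hgeq : ∀ n s, (g n).1 + (g n).2 s = cost Emax Dmax s +
      α n * min (KV Emax Dmax p q β ps false (g n).2 s)
        (KV Emax Dmax p q β ps true (g n).2 s) := by
    intro n s
    have hshift : ∀ a, KV Emax Dmax p q β ps a (W n) s
        = KV Emax Dmax p q β ps a (g n).2 s + W n (anchor Emax Dmax) := by
      intro a
      have := KV_shift (Emax := Emax) (Dmax := Dmax) (p := p) (q := q) (β := β) (ps := ps)
        (g n).2 (W n (anchor Emax Dmax)) a s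
      rw [← this]
      congr 1
      funext x
      simp [hg]
    have heq := hW n s
    rw [hshift false, hshift true, min_add_add_right] at heq
    simp only [hg]
    linarith [heq]
  -- uniform bounds give membership in a compact ball
  have hmem : ∀ n, g n ∈ Metric.closedBall (0 : ℝ × (State Emax Dmax → ℝ))
      ((Dmax : ℝ) + B) := by
    intro n
    rw [Metric.mem_closedBall, Prod.dist_eq]
    have hθ0 : 0 ≤ (g n).1 := by
      have := discounted_nonneg hβ0.le hβ1.le hp0.le hp1.le hq0.le hq1.le hps0.le hps1
        (hα0 n) (hα1 n) (hW n) (anchor Emax Dmax)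
      have h1 : 0 ≤ 1 - α n := by linarith [hα1 n]
      exact mul_nonneg h1 this
    have hθle : (g n).1 ≤ (Dmax : ℝ) :=
      discounted_le hβ0.le hβ1.le hp0.le hp1.le hq0.le hq1.le hps0.le hps1
        (hα0 n) (hα1 n) (hW n) (anchor Emax Dmax)
    have hdB : (0:ℝ) ≤ (Dmax : ℝ) + B := by positivity
    refine max_le ?_ ?_
    · rw [Prod.fst_zero, Real.dist_eq, sub_zero, abs_of_nonneg hθ0]
      linarith
    · refine (dist_pi_le_iff hdB).2 fun s => ?_
      rw [Prod.snd_zero, Pi.zero_apply, Real.dist_eq, sub_zero]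
      have := hB (α n) (hα0 n) (hα1 n) (W n) (hW n) s
      simp only [hg]
      have hd : (0:ℝ) ≤ (Dmax : ℝ) := Nat.cast_nonneg _
      linarith [this]
  obtain ⟨L, -, φ, hφ, hconv⟩ := (isCompact_closedBall
    (0 : ℝ × (State Emax Dmax → ℝ)) ((Dmax : ℝ) + B)).tendsto_subseq hmem
  refine ⟨L.1, L.2, fun s => ?_⟩
  have hθconv : Filter.Tendsto (fun k => (g (φ k)).1) Filter.atTop (nhds L.1) :=
    (continuous_fst.tendsto L).comp hconv
  have hhconv : ∀ x, Filter.Tendsto (fun k => (g (φ k)).2 x) Filter.atTop (nhds (L.2 x)) :=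
    fun x => ((continuous_apply x).tendsto L.2).comp ((continuous_snd.tendsto L).comp hconv)
  have hαφ : Filter.Tendsto (fun k => α (φ k)) Filter.atTop (nhds 1) :=
    hαlim.comp hφ.tendsto_atTop
  have hKVconv : ∀ a : Bool, Filter.Tendsto
      (fun k => KV Emax Dmax p q β ps a (g (φ k)).2 s) Filter.atTop
      (nhds (KV Emax Dmax p q β ps a L.2 s)) := by
    intro a
    simp only [KV]
    exact tendsto_finset_sum _ fun x _ => (hhconv x).const_mul _
  have h1 : Filter.Tendsto (fun k => (g (φ k)).1 + (g (φ k)).2 s) Filter.atTop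
      (nhds (L.1 + L.2 s)) := hθconv.add (hhconv s)
  have h2 : Filter.Tendsto (fun k => cost Emax Dmax s + α (φ k) *
      min (KV Emax Dmax p q β ps false (g (φ k)).2 s)
        (KV Emax Dmax p q β ps true (g (φ k)).2 s)) Filter.atTop
      (nhds (cost Emax Dmax s + 1 *
        min (KV Emax Dmax p q β ps false L.2 s) (KV Emax Dmax p q β ps true L.2 s))) :=
    tendsto_const_nhds.add (hαφ.mul ((hKVconv false).min (hKVconv true)))
  have heqseq : (fun k => (g (φ k)).1 + (g (φ k)).2 s) = fun k => cost Emax Dmax s +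
      α (φ k) * min (KV Emax Dmax p q β ps false (g (φ k)).2 s)
        (KV Emax Dmax p q β ps true (g (φ k)).2 s) := by
    funext k
    exact hgeq (φ k) s
  rw [heqseq] at h1
  have := tendsto_nhds_unique h1 h2
  rw [this, one_mul]

end Final

/-- **Proposition 2 (existence).**  There exist `θ ∈ ℝ` and `V : 𝔖 → ℝ`
solving the average-cost Bellman equation
`θ + V(S) = c(S) + min{(K_0 V)(S), (K_1 V)(S)}` for all states `S`. -/
theorem bellman_solution_exists (Emax Dmax : ℕ) (hE : 1 ≤ Emax) (hD : 1 ≤ Dmax)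
    (p q β ps : ℝ) (hp0 : 0 < p) (hp1 : p < 1) (hq0 : 0 < q) (hq1 : q < 1)
    (hβ0 : 0 < β) (hβ1 : β < 1) (hps0 : 0 < ps) (hps1 : ps ≤ 1) :
    ∃ (θ : ℝ) (V : State Emax Dmax → ℝ), ∀ s : State Emax Dmax,
      θ + V s = cost Emax Dmax s +
        min (KV Emax Dmax p q β ps false V s) (KV Emax Dmax p q β ps true V s) :=
  bellman_solution_exists' hE hD hp0 hp1 hq0 hq1 hβ0 hβ1 hps0 hps1

end VIA
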